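/- arXiv:2102.00505 — 4 statements merged into one kernel-verified Lean document; each statement's English description precedes it below -/
import Mathlib

section
/- Let n ≥ 6 be even and let p be an odd prime with p ≤ ⌈log₂ n⌉ such that p divides n and 2 is a primitive root modulo p. Then the set D = {2pl : 0 ≤ l ≤ n/(2p) − 1} ∪ {2pl − 1 : 1 ≤ l ≤ n/(2p)} is a dominating set of the Knödel graph KG_n, and hence γ(KG_n) ≤ n/p. -/
/-- The Knödel graph on `n` vertices (for even `n ≥ 6`): `x ~ y` iff
`x + y ≡ 2^t - 1 (mod n)` for some `1 ≤ t ≤ ⌊log₂ n⌋`. -/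
def knodel (n : ℕ) : SimpleGraph (ZMod n) where
  Adj x y := x ≠ y ∧ ∃ t : ℕ, 1 ≤ t ∧ t ≤ Nat.log 2 n ∧ x + y = 2 ^ t - 1
  symm := ⟨by
    rintro x y ⟨hxy, t, h1, h2, h3⟩
    exact ⟨hxy.symm, t, h1, h2, by rw [add_comm]; exact h3⟩⟩
  loopless := ⟨fun x h => h.1 rfl⟩

/-- The domination number of a finite graph. -/
noncomputable def dominationNumber {V : Type*} [Fintype V] (G : SimpleGraph V) : ℕ :=
  sInf {k | ∃ D : Finset V, (∀ v, v ∉ D → ∃ u ∈ D, G.Adj u v) ∧ D.card = k}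

-- primitive root surjectivity
lemma aux_prim (p : ℕ) (hp : p.Prime) (hp3 : 3 ≤ p)
    (hprim : orderOf (2 : ZMod p) = p - 1) :
    ∀ a : ZMod p, a ≠ 0 → ∃ t, 1 ≤ t ∧ t ≤ p - 1 ∧ (2 : ZMod p) ^ t = a := by
  haveI : Fact p.Prime := ⟨hp⟩
  have h2ne : (2 : ZMod p) ≠ 0 := by
    intro h
    have h2 : ((2 : ℕ) : ZMod p) = 0 := by exact_mod_cast h
    have := (ZMod.natCast_eq_zero_iff 2 p).mp h2
    have := Nat.le_of_dvd (by norm_num) this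
    omega
  intro a ha
  have hinj : Set.InjOn (fun t => (2 : ZMod p) ^ t) (Set.Iio (p - 1)) := by
    rw [← hprim]; exact pow_injOn_Iio_orderOf
  set S := (Finset.range (p - 1)).image (fun t => (2 : ZMod p) ^ t) with hS
  have hScard : S.card = p - 1 := by
    rw [hS, Finset.card_image_of_injOn, Finset.card_range]
    intro i hi j hj hij
    exact hinj (by simpa using Finset.mem_range.mp hi)
      (by simpa using Finset.mem_range.mp hj) hij
  have hSsub : S ⊆ Finset.univ.erase 0 := by
    intro b hb
    simp only [hS, Finset.mem_image] at hb
    obtain ⟨t, _, rfl⟩ := hb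
    exact Finset.mem_erase.mpr ⟨pow_ne_zero _ h2ne, Finset.mem_univ _⟩
  have hTcard : ((Finset.univ : Finset (ZMod p)).erase 0).card = p - 1 := by
    rw [Finset.card_erase_of_mem (Finset.mem_univ _), Finset.card_univ, ZMod.card]
  have hST : S = (Finset.univ : Finset (ZMod p)).erase 0 :=
    Finset.eq_of_subset_of_card_le hSsub (by rw [hScard, hTcard])
  have haS : a ∈ S := by rw [hST]; exact Finset.mem_erase.mpr ⟨ha, Finset.mem_univ _⟩
  rw [hS] at haS
  simp only [Finset.mem_image, Finset.mem_range] at haS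
  obtain ⟨t, ht, hta⟩ := haS
  rcases Nat.eq_zero_or_pos t with rfl | htp
  · refine ⟨p - 1, by omega, le_refl _, ?_⟩
    rw [← hprim, pow_orderOf_eq_one, ← hta, pow_zero]
  · exact ⟨t, htp, by omega, hta⟩

theorem stmt_0 (n p : ℕ) [NeZero n] (hn6 : 6 ≤ n) (hne : Even n) (hp : p.Prime) (hpodd : Odd p)
    (hple : p ≤ Nat.clog 2 n) (hpdvd : p ∣ n)
    (hprim : orderOf (2 : ZMod p) = p - 1) :
    (∀ x : ZMod n,
        x ∉ ({x : ZMod n | ∃ l : ℕ, l ≤ n / (2 * p) - 1 ∧ x = ((2 * p * l : ℕ) : ZMod n)} ∪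
             {x : ZMod n | ∃ l : ℕ, 1 ≤ l ∧ l ≤ n / (2 * p) ∧
                x = ((2 * p * l : ℕ) : ZMod n) - 1}) →
        ∃ y ∈ ({x : ZMod n | ∃ l : ℕ, l ≤ n / (2 * p) - 1 ∧ x = ((2 * p * l : ℕ) : ZMod n)} ∪
             {x : ZMod n | ∃ l : ℕ, 1 ≤ l ∧ l ≤ n / (2 * p) ∧
                x = ((2 * p * l : ℕ) : ZMod n) - 1}), (knodel n).Adj y x) ∧
    dominationNumber (knodel n) ≤ n / p := by
  have hpodd' : p % 2 = 1 := Nat.odd_iff.mp hpodd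
  have hp3 : 3 ≤ p := by have := hp.two_le; omega
  have hcop : Nat.Coprime 2 p := (Nat.prime_two.coprime_iff_not_dvd).mpr (by omega)
  have hqn : 2 * p ∣ n := hcop.mul_dvd_of_dvd_of_dvd hne.two_dvd hpdvd
  have hnpos : 0 < n := by omega
  set q := 2 * p with hq
  set m := n / q with hmdef
  have hmn : n = q * m := (Nat.div_mul_cancel hqn).symm.trans (mul_comm _ _)
  have hm1 : 1 ≤ m := by
    rcases Nat.eq_zero_or_pos m with h | h
    · rw [h, mul_zero] at hmn; omega
    · exact h
  haveI : NeZero q := ⟨by omega⟩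
  haveI : NeZero p := ⟨by omega⟩
  -- log bound
  have hlog : p - 1 ≤ Nat.log 2 n := by
    have h1 : n ≤ 2 ^ (Nat.log 2 n + 1) :=
      le_of_lt (Nat.lt_pow_succ_log_self (by norm_num) n)
    have h2 : Nat.clog 2 n ≤ Nat.log 2 n + 1 :=
      (Nat.clog_le_iff_le_pow (by norm_num)).mpr h1
    omega
  have hA := aux_prim p hp hp3 hprim
  -- the cast map
  set φ : ZMod n →+* ZMod q := ZMod.castHom hqn (ZMod q) with hφdef
  have hφval : ∀ x : ZMod n, φ x = ((x.val : ℕ) : ZMod q) := by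
    intro x
    rw [hφdef, ZMod.castHom_apply, ← ZMod.natCast_val]
  have hφnat : ∀ a : ℕ, φ ((a : ZMod n)) = (a : ZMod q) := fun a => map_natCast φ a
  -- membership lemmas
  have memD0 : ∀ y : ZMod n, φ y = 0 → ∃ l, l ≤ m - 1 ∧ y = ((q * l : ℕ) : ZMod n) := by
    intro y hy
    rw [hφval] at hy
    obtain ⟨k, hk⟩ := (ZMod.natCast_eq_zero_iff _ _).mp hy
    have hvlt : y.val < n := ZMod.val_lt y
    have hkm : k ≤ m - 1 := by
      by_contra h
      have : m ≤ k := by omega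
      have := Nat.mul_le_mul_left q this
      omega
    refine ⟨k, hkm, ?_⟩
    rw [← hk, ZMod.natCast_val, ZMod.cast_id]
  have memD1 : ∀ y : ZMod n, φ y = -1 →
      ∃ l, 1 ≤ l ∧ l ≤ m ∧ y = ((q * l : ℕ) : ZMod n) - 1 := by
    intro y hy
    rw [hφval] at hy
    have hy' : ((y.val + 1 : ℕ) : ZMod q) = 0 := by push_cast; rw [hy]; ring
    obtain ⟨k, hk⟩ := (ZMod.natCast_eq_zero_iff _ _).mp hy'
    have hvlt : y.val < n := ZMod.val_lt y
    have hk1 : 1 ≤ k := by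
      rcases Nat.eq_zero_or_pos k with h | h
      · rw [h, mul_zero] at hk; omega
      · exact h
    have hkm : k ≤ m := by
      by_contra h
      have h1 : m + 1 ≤ k := by omega
      have h2 := Nat.mul_le_mul_left q h1
      have h3 : q * (m + 1) = q * m + q := by ring
      omega
    refine ⟨k, hk1, hkm, ?_⟩
    rw [← hk]
    push_cast
    rw [ZMod.natCast_val, ZMod.cast_id]
    ring
  have memD0' : ∀ l : ℕ, φ (((q * l : ℕ) : ZMod n)) = 0 := by
    intro l
    rw [hφnat]
    exact (ZMod.natCast_eq_zero_iff _ _).mpr ⟨l, rfl⟩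
  have memD1' : ∀ l : ℕ, φ ((((q * l : ℕ)) : ZMod n) - 1) = -1 := by
    intro l
    rw [map_sub, map_one, hφnat]
    rw [(ZMod.natCast_eq_zero_iff (q * l) q).mpr ⟨l, rfl⟩]
    ring
  -- key construction
  have key : ∀ x : ZMod n, φ x ≠ 0 → φ x ≠ -1 →
      ∃ y : ZMod n, (φ y = 0 ∨ φ y = -1) ∧ (knodel n).Adj y x := by
    intro x hx0 hx1
    set r := x.val % q with hrdef
    have hrq : r < q := Nat.mod_lt _ (by omega)
    have hφr : φ x = ((r : ℕ) : ZMod q) := by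
      rw [hφval, hrdef, ZMod.natCast_mod]
    have hr0 : r ≠ 0 := by
      intro h; apply hx0; rw [hφr, h]; simp
    have hrq1 : r ≠ q - 1 := by
      intro h
      apply hx1
      rw [hφr, h, Nat.cast_sub (by omega : 1 ≤ q), ZMod.natCast_self, Nat.cast_one]
      ring
    -- common construction given t with 2^t ≡ target [MOD q]
    have build : ∀ t : ℕ, 1 ≤ t → t ≤ p - 1 → ∀ c : ZMod q,
        ((2 ^ t : ℕ) : ZMod q) = c →
        ∃ y : ZMod n, φ y = c - 1 - φ x ∧
          (y = ((2 ^ t : ℕ) : ZMod n) - 1 - x) ∧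
          (y ≠ x → (knodel n).Adj y x) := by
      intro t ht1 htp c hc
      refine ⟨((2 ^ t : ℕ) : ZMod n) - 1 - x, ?_, rfl, ?_⟩
      · rw [map_sub, map_sub, map_one, hφnat, hc]
      · intro hne'
        show _ ≠ _ ∧ ∃ t : ℕ, 1 ≤ t ∧ t ≤ Nat.log 2 n ∧ _ + _ = 2 ^ t - 1
        refine ⟨hne', t, ht1, le_trans (by omega) hlog, ?_⟩
        push_cast
        ring
    rcases Nat.even_or_odd r with hpar | hpar
    · -- r even, target 2^t ≡ r [MOD q], y ≡ -1
      have hrpar : r % 2 = 0 := Nat.even_iff.mp hpar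
      have hap : ((r : ℕ) : ZMod p) ≠ 0 := by
        intro h
        obtain ⟨k, hk⟩ := (ZMod.natCast_eq_zero_iff _ _).mp h
        have h2r : 2 ∣ r := Nat.dvd_of_mod_eq_zero hrpar
        have : q ∣ r := hcop.mul_dvd_of_dvd_of_dvd h2r ⟨k, hk⟩
        have := Nat.le_of_dvd (by omega) this
        omega
      obtain ⟨t, ht1, htp, hta⟩ := hA _ hap
      have hmodp : 2 ^ t ≡ r [MOD p] := by
        apply (ZMod.natCast_eq_natCast_iff _ _ _).mp
        push_cast
        exact hta
      have hmod2 : 2 ^ t ≡ r [MOD 2] := by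
        unfold Nat.ModEq
        rw [hrpar, Nat.pow_mod]
        simp [Nat.one_le_iff_ne_zero.mp ht1]
      have hmodq : 2 ^ t ≡ r [MOD q] :=
        (Nat.modEq_and_modEq_iff_modEq_mul hcop).mp ⟨hmod2, hmodp⟩
      have hcq : ((2 ^ t : ℕ) : ZMod q) = ((r : ℕ) : ZMod q) :=
        (ZMod.natCast_eq_natCast_iff _ _ _).mpr hmodq
      obtain ⟨y, hyφ, hyeq, hyadj⟩ := build t ht1 htp _ hcq
      have hyφ' : φ y = -1 := by rw [hyφ, hφr]; ring
      refine ⟨y, Or.inr hyφ', hyadj ?_⟩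
      intro h
      rw [h] at hyφ'
      exact hx1 hyφ'
    · -- r odd, target 2^t ≡ r + 1 [MOD q], y ≡ 0
      have hrpar : r % 2 = 1 := Nat.odd_iff.mp hpar
      have hap : ((r + 1 : ℕ) : ZMod p) ≠ 0 := by
        intro h
        obtain ⟨k, hk⟩ := (ZMod.natCast_eq_zero_iff _ _).mp h
        have h2r : 2 ∣ (r + 1) := by omega
        have : q ∣ (r + 1) := hcop.mul_dvd_of_dvd_of_dvd h2r ⟨k, by exact_mod_cast hk⟩
        have := Nat.le_of_dvd (by omega) this
        omega
      obtain ⟨t, ht1, htp, hta⟩ := hA _ hap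
      have hmodp : 2 ^ t ≡ r + 1 [MOD p] := by
        apply (ZMod.natCast_eq_natCast_iff _ _ _).mp
        push_cast
        push_cast at hta
        exact hta
      have hmod2 : 2 ^ t ≡ r + 1 [MOD 2] := by
        unfold Nat.ModEq
        rw [Nat.pow_mod]
        simp [Nat.one_le_iff_ne_zero.mp ht1]
        omega
      have hmodq : 2 ^ t ≡ r + 1 [MOD q] :=
        (Nat.modEq_and_modEq_iff_modEq_mul hcop).mp ⟨hmod2, hmodp⟩
      have hcq : ((2 ^ t : ℕ) : ZMod q) = ((r + 1 : ℕ) : ZMod q) :=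
        (ZMod.natCast_eq_natCast_iff _ _ _).mpr hmodq
      obtain ⟨y, hyφ, hyeq, hyadj⟩ := build t ht1 htp _ hcq
      have hyφ' : φ y = 0 := by rw [hyφ, hφr]; push_cast; ring
      refine ⟨y, Or.inl hyφ', hyadj ?_⟩
      intro h
      rw [h] at hyφ'
      exact hx0 hyφ'
  constructor
  · -- domination of the set
    intro x hx
    rw [Set.mem_union] at hx
    push_neg at hx
    obtain ⟨hx0', hx1'⟩ := hx
    have hx0 : φ x ≠ 0 := by
      intro h
      obtain ⟨l, hl, hxl⟩ := memD0 x h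
      exact hx0' ⟨l, hl, hxl⟩
    have hx1 : φ x ≠ -1 := by
      intro h
      obtain ⟨l, hl1, hl2, hxl⟩ := memD1 x h
      exact hx1' ⟨l, hl1, hl2, hxl⟩
    obtain ⟨y, hyφ, hyadj⟩ := key x hx0 hx1
    refine ⟨y, ?_, hyadj⟩
    rcases hyφ with h | h
    · obtain ⟨l, hl, hyl⟩ := memD0 y h
      exact Set.mem_union_left _ ⟨l, hl, hyl⟩
    · obtain ⟨l, hl1, hl2, hyl⟩ := memD1 y h
      exact Set.mem_union_right _ ⟨l, hl1, hl2, hyl⟩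
  · -- cardinality bound
    have hnp : n / p = 2 * m := by
      have h : n = p * (2 * m) := by rw [hmn, hq]; ring
      rw [h, Nat.mul_div_cancel_left _ (by omega : 0 < p)]
    set D1 : Finset (ZMod n) := (Finset.range m).image (fun l => ((q * l : ℕ) : ZMod n))
      with hD1
    set D2 : Finset (ZMod n) :=
      (Finset.range m).image (fun l => ((q * (l + 1) : ℕ) : ZMod n) - 1) with hD2
    have hmemD12 : ∀ y : ZMod n, (φ y = 0 ∨ φ y = -1) → y ∈ D1 ∪ D2 := by
      intro y hy
      rcases hy with h | h
      · obtain ⟨l, hl, hyl⟩ := memD0 y h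
        apply Finset.mem_union_left
        rw [hD1, Finset.mem_image]
        exact ⟨l, Finset.mem_range.mpr (by omega), hyl.symm⟩
      · obtain ⟨l, hl1, hl2, hyl⟩ := memD1 y h
        apply Finset.mem_union_right
        rw [hD2, Finset.mem_image]
        refine ⟨l - 1, Finset.mem_range.mpr (by omega), ?_⟩
        rw [Nat.sub_add_cancel hl1]
        exact hyl.symm
    have hdom12 : ∀ v, v ∉ D1 ∪ D2 → ∃ u ∈ D1 ∪ D2, (knodel n).Adj u v := by
      intro v hv
      have hv0 : φ v ≠ 0 := fun h => hv (hmemD12 v (Or.inl h))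
      have hv1 : φ v ≠ -1 := fun h => hv (hmemD12 v (Or.inr h))
      obtain ⟨y, hyφ, hyadj⟩ := key v hv0 hv1
      exact ⟨y, hmemD12 y hyφ, hyadj⟩
    have hcard12 : (D1 ∪ D2).card ≤ n / p := by
      calc (D1 ∪ D2).card ≤ D1.card + D2.card := Finset.card_union_le _ _
        _ ≤ m + m := by
            gcongr <;> exact le_trans (Finset.card_image_le) (by rw [Finset.card_range])
        _ = n / p := by omega
    have hnpn : n / p ≤ Fintype.card (ZMod n) := by
      rw [ZMod.card]
      exact Nat.div_le_self _ _
    obtain ⟨E, hE1, hE2, hEcard⟩ :=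
      Finset.exists_subsuperset_card_eq (Finset.subset_univ (D1 ∪ D2)) hcard12
        (by rw [Finset.card_univ]; exact hnpn)
    apply Nat.sInf_le
    refine ⟨E, ?_, hEcard⟩
    intro v hv
    have hv' : v ∉ D1 ∪ D2 := fun h => hv (hE1 h)
    obtain ⟨u, hu, huv⟩ := hdom12 v hv'
    exact ⟨u, hE1 hu, huv⟩
end

section
/- Let G be a graph on n vertices with maximum degree Δ such that (Δ + 1) divides n. If γ(G) = n/(Δ + 1), then every minimum dominating set D of G is an efficient dominating set: D is independent and every vertex not in D has exactly one neighbor in D. -/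
theorem stmt_4 {V : Type*} [Fintype V] (G : SimpleGraph V) [DecidableRel G.Adj]
    (hdvd : (G.maxDegree + 1) ∣ Fintype.card V)
    (hgam : dominationNumber G = Fintype.card V / (G.maxDegree + 1))
    (D : Finset V) (hdom : ∀ v, v ∉ D → ∃ u ∈ D, G.Adj u v)
    (hmin : D.card = dominationNumber G) :
    (∀ u ∈ D, ∀ v ∈ D, ¬ G.Adj u v) ∧
    (∀ v, v ∉ D → ∃! u, u ∈ D ∧ G.Adj u v) := by
  classical
  have hD : D.card * (G.maxDegree + 1) = Fintype.card V := by
    rw [hmin, hgam]; exact Nat.div_mul_cancel hdvd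
  set f : V → ℕ := fun v => (D.filter (fun u => u = v ∨ G.Adj u v)).card with hf
  have h1 : ∀ v ∈ (Finset.univ : Finset V), 1 ≤ f v := by
    intro v _
    rw [Nat.one_le_iff_ne_zero, ne_eq, Finset.card_eq_zero, ← ne_eq,
      ← Finset.nonempty_iff_ne_empty]
    by_cases hv : v ∈ D
    · exact ⟨v, Finset.mem_filter.2 ⟨hv, Or.inl rfl⟩⟩
    · obtain ⟨u, hu, hadj⟩ := hdom v hv
      exact ⟨u, Finset.mem_filter.2 ⟨hu, Or.inr hadj⟩⟩
  have h2 : ∑ v : V, f v ≤ Fintype.card V := by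
    calc ∑ v : V, f v
        = ∑ u ∈ D, (Finset.univ.filter (fun v => u = v ∨ G.Adj u v)).card := by
          simp only [hf, Finset.card_filter]
          rw [Finset.sum_comm]
      _ = ∑ u ∈ D, (G.degree u + 1) := by
          refine Finset.sum_congr rfl fun u _ => ?_
          have : Finset.univ.filter (fun v => u = v ∨ G.Adj u v)
              = insert u (G.neighborFinset u) := by
            ext v
            simp [SimpleGraph.mem_neighborFinset, eq_comm, or_comm]
          rw [this, Finset.card_insert_of_notMem (G.notMem_neighborFinset_self u),
            SimpleGraph.card_neighborFinset_eq_degree, add_comm]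
      _ ≤ ∑ u ∈ D, (G.maxDegree + 1) :=
          Finset.sum_le_sum fun u _ => by
            exact Nat.add_le_add_right (G.degree_le_maxDegree u) 1
      _ = D.card * (G.maxDegree + 1) := by rw [Finset.sum_const, smul_eq_mul]
      _ = Fintype.card V := hD
  have key : ∀ v : V, f v = 1 := by
    have hsum : ∑ v : V, (1 : ℕ) = ∑ v : V, f v := by
      have hle : ∑ v : V, (1 : ℕ) ≤ ∑ v : V, f v := Finset.sum_le_sum h1
      have : ∑ v : V, (1 : ℕ) = Fintype.card V := by simp
      omega
    intro v
    exact ((Finset.sum_eq_sum_iff_of_le h1).mp hsum v (Finset.mem_univ v)).symm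
  constructor
  · intro u hu v hv hadj
    have huv : u ≠ v := G.ne_of_adj hadj
    have hsub : {u, v} ⊆ D.filter (fun w => w = v ∨ G.Adj w v) := by
      intro w hw
      rcases Finset.mem_insert.1 hw with rfl | hw
      · exact Finset.mem_filter.2 ⟨hu, Or.inr hadj⟩
      · rw [Finset.mem_singleton] at hw; subst hw
        exact Finset.mem_filter.2 ⟨hv, Or.inl rfl⟩
    have := Finset.card_le_card hsub
    have hk := key v
    simp only [hf] at hk
    rw [hk, Finset.card_insert_of_notMem (by simpa using huv),
      Finset.card_singleton] at this
    omega
  · intro v hv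
    have hk := key v
    simp only [hf] at hk
    obtain ⟨a, ha⟩ := Finset.card_eq_one.1 hk
    obtain ⟨u, hu, hadj⟩ := hdom v hv
    have hu' : u ∈ D.filter (fun w => w = v ∨ G.Adj w v) :=
      Finset.mem_filter.2 ⟨hu, Or.inr hadj⟩
    rw [ha, Finset.mem_singleton] at hu'
    subst hu'
    refine ⟨u, ⟨hu, hadj⟩, fun w hw => ?_⟩
    have : w ∈ D.filter (fun x => x = v ∨ G.Adj x v) :=
      Finset.mem_filter.2 ⟨hw.1, Or.inr hw.2⟩
    rw [ha, Finset.mem_singleton] at this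
    exact this
end

section
/- Let n be even and suppose (⌊log₂ n⌋ + 1) divides n. If γ(KG_n) = n/(⌊log₂ n⌋ + 1), then this quantity is an even integer, and every minimum dominating set of KG_n contains equally many even and odd vertices. -/
section aux
open scoped Classical

variable {n : ℕ} [NeZero n]

/-- Adjacent vertices have opposite parity of values. -/
lemma knodel_adj_parity (hn6 : 6 ≤ n) (hne : Even n) {x y : ZMod n}
    (h : (knodel n).Adj x y) : (x.val + y.val) % 2 = 1 := by
  obtain ⟨hxy, t, ht1, ht2, heq⟩ := h
  have hn0 : n ≠ 0 := by omega
  have hpow : (2 : ℕ) ^ t ≤ n :=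
    le_trans (Nat.pow_le_pow_right (by norm_num) ht2) (Nat.pow_log_le_self 2 hn0)
  have h1le : (1 : ℕ) ≤ 2 ^ t := Nat.one_le_two_pow
  have hcast : ((2 ^ t - 1 : ℕ) : ZMod n) = 2 ^ t - 1 := by
    push_cast [h1le]; ring
  have hval : (x + y).val = 2 ^ t - 1 := by
    rw [heq, ← hcast, ZMod.val_cast_of_lt (by omega)]
  rw [ZMod.val_add] at hval
  have h2n : (2 : ℕ) ∣ n := hne.two_dvd
  have := Nat.mod_mod_of_dvd (x.val + y.val) h2n
  rw [hval] at this
  have h2t : (2 : ℕ) ∣ 2 ^ t := dvd_pow_self 2 (by omega)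
  omega

/-- The open neighborhood of a vertex has at most `log₂ n` elements. -/
lemma knodel_nbhd_card (u : ZMod n) :
    (Finset.univ.filter ((knodel n).Adj u)).card ≤ Nat.log 2 n := by
  have hsub : Finset.univ.filter ((knodel n).Adj u) ⊆
      (Finset.Icc 1 (Nat.log 2 n)).image (fun t : ℕ => (2 : ZMod n) ^ t - 1 - u) := by
    intro y hy
    simp only [Finset.mem_filter, Finset.mem_univ, true_and] at hy
    obtain ⟨hxy, t, ht1, ht2, heq⟩ := hy
    refine Finset.mem_image.2 ⟨t, Finset.mem_Icc.2 ⟨ht1, ht2⟩, ?_⟩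
    rw [show y = 2 ^ t - 1 - u by rw [← heq]; ring]
  calc (Finset.univ.filter ((knodel n).Adj u)).card
      ≤ _ := Finset.card_le_card hsub
    _ ≤ (Finset.Icc 1 (Nat.log 2 n)).card := Finset.card_image_le
    _ = Nat.log 2 n := by simp [Nat.card_Icc]

/-- Even and odd residues are equinumerous when `n` is even. -/
lemma evens_card_eq_odds (hn6 : 6 ≤ n) (hne : Even n) :
    (Finset.univ.filter (fun v : ZMod n => Even v.val)).card =
    (Finset.univ.filter (fun v : ZMod n => Odd v.val)).card := by
  have hn1 : 1 < n := by omega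
  haveI : Fact (1 < n) := ⟨hn1⟩
  refine Finset.card_bij (fun x _ => x + 1) ?_ ?_ ?_
  · intro x hx
    simp only [Finset.mem_filter, Finset.mem_univ, true_and] at hx ⊢
    have hxv : x.val < n := ZMod.val_lt x
    have hxle : x.val + 1 < n := by
      rcases hx with ⟨c, hc⟩; rcases hne with ⟨d, hd⟩; omega
    have : (x + 1).val = x.val + 1 := by
      rw [ZMod.val_add, ZMod.val_one n, Nat.mod_eq_of_lt hxle]
    rw [this]
    exact hx.add_one
  · intro a ha b hb hab
    exact add_left_injective 1 hab
  · intro w hw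
    simp only [Finset.mem_filter, Finset.mem_univ, true_and] at hw
    have hw1 : 1 ≤ w.val := hw.pos
    have hwlt : w.val - 1 < n := by have := ZMod.val_lt w; omega
    refine ⟨((w.val - 1 : ℕ) : ZMod n), ?_, ?_⟩
    · simp only [Finset.mem_filter, Finset.mem_univ, true_and,
        ZMod.val_cast_of_lt hwlt]
      rcases hw with ⟨c, hc⟩; exact ⟨c, by omega⟩
    · have : ((w.val - 1 : ℕ) : ZMod n) + 1 = ((w.val - 1 + 1 : ℕ) : ZMod n) := by
        push_cast; ring
      show ((w.val - 1 : ℕ) : ZMod n) + 1 = w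
      rw [this, Nat.sub_add_cancel hw1, ZMod.natCast_val, ZMod.cast_id]

/-- Key counting lemma: any dominating set of size `n / (log₂ n + 1)` has
equally many even and odd vertices. -/
lemma knodel_key (hn6 : 6 ≤ n) (hne : Even n) (hdvd : (Nat.log 2 n + 1) ∣ n)
    (D : Finset (ZMod n)) (hdom : ∀ v, v ∉ D → ∃ u ∈ D, (knodel n).Adj u v)
    (hcard : D.card = n / (Nat.log 2 n + 1)) :
    (D.filter (fun x => Even x.val)).card = (D.filter (fun x => Odd x.val)).card := by
  classical
  set k := Nat.log 2 n with hkdef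
  have hk2 : 2 ≤ k := by
    have : (2 : ℕ) ^ 2 ≤ n := by omega
    exact (Nat.le_log_iff_pow_le (by norm_num) (by omega)).2 this
  have hm : D.card * (k + 1) = n := by
    rw [hcard]; exact Nat.div_mul_cancel hdvd
  set N : ZMod n → Finset (ZMod n) :=
    fun u => insert u (Finset.univ.filter ((knodel n).Adj u)) with hNdef
  have hcover : ∀ v : ZMod n, ∃ u ∈ D, v ∈ N u := by
    intro v
    by_cases hv : v ∈ D
    · exact ⟨v, hv, Finset.mem_insert_self _ _⟩
    · obtain ⟨u, hu, hadj⟩ := hdom v hv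
      exact ⟨u, hu, Finset.mem_insert_of_mem (by simp [hadj])⟩
  set E := D.filter (fun x => Even x.val) with hEdef
  set O := D.filter (fun x => Odd x.val) with hOdef
  have hOE : O = D.filter (fun x => ¬ Even x.val) := by
    rw [hOdef]; apply Finset.filter_congr; intro x _; simp [Nat.not_even_iff_odd]
  have hEO : E.card + O.card = D.card := by
    rw [hEdef, hOE]
    exact Finset.card_filter_add_card_filter_not _
  -- counts of evens / odds inside closed neighborhoods
  have hNE : ∀ u ∈ E, ((N u).filter (fun v => Even (ZMod.val v))).card ≤ 1 := by
    intro u hu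
    rw [hEdef] at hu
    simp only [Finset.mem_filter] at hu
    refine le_trans (Finset.card_le_card ?_) (by simp : ({u} : Finset (ZMod n)).card ≤ 1)
    intro y hy
    simp only [Finset.mem_filter, hNdef, Finset.mem_insert, Finset.mem_univ, true_and,
      Finset.mem_singleton] at hy ⊢
    rcases hy with ⟨hy1 | hy1, hy2⟩
    · exact hy1
    · exfalso
      have := knodel_adj_parity hn6 hne hy1
      rw [Nat.even_iff] at hy2
      have hu2 := hu.2
      rw [Nat.even_iff] at hu2
      omega
  have hNO : ∀ u ∈ O, ((N u).filter (fun v => Odd (ZMod.val v))).card ≤ 1 := by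
    intro u hu
    rw [hOdef] at hu
    simp only [Finset.mem_filter] at hu
    refine le_trans (Finset.card_le_card ?_) (by simp : ({u} : Finset (ZMod n)).card ≤ 1)
    intro y hy
    simp only [Finset.mem_filter, hNdef, Finset.mem_insert, Finset.mem_univ, true_and,
      Finset.mem_singleton] at hy ⊢
    rcases hy with ⟨hy1 | hy1, hy2⟩
    · exact hy1
    · exfalso
      have := knodel_adj_parity hn6 hne hy1
      rw [Nat.odd_iff] at hy2
      have hu2 := hu.2
      rw [Nat.odd_iff] at hu2
      omega
  have hNk : ∀ (u : ZMod n) (p : ℕ → Prop) [DecidablePred p], (¬ p u.val) →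
      ((N u).filter (fun v => p (ZMod.val v))).card ≤ k := by
    intro u p _ hup
    refine le_trans (Finset.card_le_card ?_) (knodel_nbhd_card u)
    intro y hy
    simp only [Finset.mem_filter, hNdef, Finset.mem_insert, Finset.mem_univ, true_and] at hy ⊢
    rcases hy with ⟨hy1 | hy1, hy2⟩
    · exact absurd (hy1 ▸ hy2) hup
    · exact hy1
  -- total counts
  have hsubA : ∀ (p : ℕ → Prop) [DecidablePred p],
      Finset.univ.filter (fun v : ZMod n => p v.val) ⊆
        D.biUnion (fun u => (N u).filter (fun v => p (ZMod.val v))) := by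
    intro p _ v hv
    obtain ⟨u, hu, hvu⟩ := hcover v
    simp only [Finset.mem_filter, Finset.mem_univ, true_and] at hv
    exact Finset.mem_biUnion.2 ⟨u, hu, Finset.mem_filter.2 ⟨hvu, hv⟩⟩
  have hsplit : ∀ (f : ZMod n → ℕ), ∑ u ∈ D, f u = ∑ u ∈ E, f u + ∑ u ∈ O, f u := by
    intro f
    rw [hEdef, hOE]
    exact (Finset.sum_filter_add_sum_filter_not D _ f).symm
  have hAbound : (Finset.univ.filter (fun v : ZMod n => Even v.val)).card ≤
      E.card * 1 + O.card * k := by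
    calc (Finset.univ.filter (fun v : ZMod n => Even v.val)).card
        ≤ (D.biUnion (fun u => (N u).filter (fun v => Even (ZMod.val v)))).card :=
          Finset.card_le_card (hsubA _)
      _ ≤ ∑ u ∈ D, ((N u).filter (fun v => Even (ZMod.val v))).card :=
          Finset.card_biUnion_le
      _ = ∑ u ∈ E, ((N u).filter (fun v => Even (ZMod.val v))).card
          + ∑ u ∈ O, ((N u).filter (fun v => Even (ZMod.val v))).card := hsplit _
      _ ≤ E.card * 1 + O.card * k := by
          refine add_le_add ?_ ?_
          · simpa [smul_eq_mul] using Finset.sum_le_card_nsmul E _ 1 hNE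
          · refine le_trans (Finset.sum_le_card_nsmul O _ k ?_) (by simp [smul_eq_mul])
            intro u hu
            refine hNk u _ ?_
            rw [hOdef] at hu
            simp only [Finset.mem_filter] at hu
            exact (Nat.not_even_iff_odd).2 hu.2
  have hBbound : (Finset.univ.filter (fun v : ZMod n => Odd v.val)).card ≤
      O.card * 1 + E.card * k := by
    calc (Finset.univ.filter (fun v : ZMod n => Odd v.val)).card
        ≤ (D.biUnion (fun u => (N u).filter (fun v => Odd (ZMod.val v)))).card :=
          Finset.card_le_card (hsubA _)
      _ ≤ ∑ u ∈ D, ((N u).filter (fun v => Odd (ZMod.val v))).card :=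
          Finset.card_biUnion_le
      _ = ∑ u ∈ E, ((N u).filter (fun v => Odd (ZMod.val v))).card
          + ∑ u ∈ O, ((N u).filter (fun v => Odd (ZMod.val v))).card := hsplit _
      _ ≤ E.card * k + O.card * 1 := by
          refine add_le_add ?_ ?_
          · refine le_trans (Finset.sum_le_card_nsmul E _ k ?_) (by simp [smul_eq_mul])
            intro u hu
            refine hNk u _ ?_
            rw [hEdef] at hu
            simp only [Finset.mem_filter] at hu
            exact (Nat.not_odd_iff_even).2 hu.2
          · simpa [smul_eq_mul] using Finset.sum_le_card_nsmul O _ 1 hNO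
      _ = O.card * 1 + E.card * k := by ring
  have hABtot : (Finset.univ.filter (fun v : ZMod n => Even v.val)).card +
      (Finset.univ.filter (fun v : ZMod n => Odd v.val)).card = n := by
    have h1 : Finset.univ.filter (fun v : ZMod n => Odd v.val) =
        Finset.univ.filter (fun v : ZMod n => ¬ Even v.val) := by
      apply Finset.filter_congr; intro x _; simp [Nat.not_even_iff_odd]
    rw [h1, Finset.card_filter_add_card_filter_not, Finset.card_univ, ZMod.card]
  have hABeq := evens_card_eq_odds (n := n) hn6 hne
  -- put it together
  have hexp : (E.card + O.card) * (k + 1) = (E.card * 1 + O.card * k) +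
      (O.card * 1 + E.card * k) := by ring
  rw [hEO, hm] at hexp
  have hEq : E.card * 1 + O.card * k = O.card * 1 + E.card * k := by
    set a := (Finset.univ.filter (fun v : ZMod n => Even v.val)).card
    set b := (Finset.univ.filter (fun v : ZMod n => Odd v.val)).card
    set x := E.card * 1 + O.card * k
    set y := O.card * 1 + E.card * k
    omega
  have hz : ((k : ℤ) - 1) * ((O.card : ℤ) - E.card) = 0 := by
    have := hEq
    zify at this
    linear_combination this
  rcases mul_eq_zero.1 hz with h' | h'
  · exfalso
    have : (k : ℤ) = 1 := by linarith
    have : k = 1 := by exact_mod_cast this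
    omega
  · have : (O.card : ℤ) = E.card := by linarith
    exact_mod_cast this.symm

end aux

theorem stmt_11 (n : ℕ) [NeZero n] (hn6 : 6 ≤ n) (hne : Even n)
    (hdvd : (Nat.log 2 n + 1) ∣ n)
    (hgam : dominationNumber (knodel n) = n / (Nat.log 2 n + 1)) :
    Even (n / (Nat.log 2 n + 1)) ∧
    ∀ D : Finset (ZMod n), (∀ v, v ∉ D → ∃ u ∈ D, (knodel n).Adj u v) →
      D.card = dominationNumber (knodel n) →
      (D.filter (fun x => Even x.val)).card = (D.filter (fun x => Odd x.val)).card := by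
  classical
  have hpart2 : ∀ D : Finset (ZMod n), (∀ v, v ∉ D → ∃ u ∈ D, (knodel n).Adj u v) →
      D.card = dominationNumber (knodel n) →
      (D.filter (fun x => Even x.val)).card = (D.filter (fun x => Odd x.val)).card := by
    intro D hdom hcard
    exact knodel_key hn6 hne hdvd D hdom (hcard.trans hgam)
  refine ⟨?_, hpart2⟩
  -- existence of a minimum dominating set
  have hnonempty : {k | ∃ D : Finset (ZMod n),
      (∀ v, v ∉ D → ∃ u ∈ D, (knodel n).Adj u v) ∧ D.card = k}.Nonempty := by
    refine ⟨n, Finset.univ, fun v hv => absurd (Finset.mem_univ v) hv, ?_⟩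
    rw [Finset.card_univ, ZMod.card]
  have hmem := Nat.sInf_mem hnonempty
  obtain ⟨D, hdom, hDcard⟩ := hmem
  have hD2 : D.card = dominationNumber (knodel n) := hDcard
  have heq := hpart2 D hdom hD2
  have hsum : (D.filter (fun x => Even x.val)).card +
      (D.filter (fun x => Odd x.val)).card = D.card := by
    have h1 : D.filter (fun x => Odd x.val) = D.filter (fun x => ¬ Even x.val) := by
      apply Finset.filter_congr; intro x _; simp [Nat.not_even_iff_odd]
    rw [h1, Finset.card_filter_add_card_filter_not]
  rw [hD2, hgam] at hsum
  exact ⟨(D.filter (fun x => Even x.val)).card, by omega⟩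
end

section
/- Let n ≥ 6 be even and suppose ⌈log₂ n⌉ = p where p is an odd prime dividing n and 2 is a primitive root modulo p. Then γ(KG_n) = n/p. -/
lemma crt_inj {p : ℕ} (hp : p.Prime) (hodd : Odd p) {x y : ZMod (2*p)}
    (h2 : ZMod.castHom (dvd_mul_right 2 p) (ZMod 2) x = ZMod.castHom (dvd_mul_right 2 p) (ZMod 2) y)
    (hpp : ZMod.castHom (dvd_mul_left p 2) (ZMod p) x = ZMod.castHom (dvd_mul_left p 2) (ZMod p) y) :
    x = y := by
  haveI : NeZero (2*p) := ⟨by have := hp.two_le; positivity⟩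
  have hz : x - y = 0 := by
    have h2' : ZMod.castHom (dvd_mul_right 2 p) (ZMod 2) (x - y) = 0 := by
      rw [map_sub, h2, sub_self]
    have hp' : ZMod.castHom (dvd_mul_left p 2) (ZMod p) (x - y) = 0 := by
      rw [map_sub, hpp, sub_self]
    rw [ZMod.castHom_apply, ← ZMod.natCast_val] at h2' hp'
    rw [ZMod.natCast_eq_zero_iff] at h2' hp'
    have hcop : Nat.Coprime 2 p := Nat.coprime_two_left.mpr hodd
    have : 2 * p ∣ (x - y).val := hcop.mul_dvd_of_dvd_of_dvd h2' hp'
    have hv : (x - y).val < 2 * p := ZMod.val_lt _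
    have : (x - y).val = 0 := Nat.eq_zero_of_dvd_of_lt this hv
    exact (ZMod.val_eq_zero _).mp this
  linear_combination hz

lemma exists_pow_eq {p : ℕ} (hp : p.Prime) (hodd : Odd p)
    (hprim : orderOf (2 : ZMod p) = p - 1) (a : ZMod p) (ha : a ≠ 0) :
    ∃ t : ℕ, 1 ≤ t ∧ t ≤ p - 1 ∧ (2 : ZMod p) ^ t = a := by
  haveI : Fact p.Prime := ⟨hp⟩
  have hp1 : 1 ≤ p - 1 := by have := hp.two_le; omega
  have h2ne : (2 : ZMod p) ≠ 0 := by
    intro h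
    have : ((2:ℕ) : ZMod p) = 0 := by exact_mod_cast h
    rw [ZMod.natCast_eq_zero_iff] at this
    have h2 := Nat.le_of_dvd (by norm_num) this
    have : p ≠ 2 := fun h => by rw [h] at hodd; exact (by norm_num : ¬ Odd 2) hodd
    have := hp.two_le
    omega
  have hu : IsUnit (2 : ZMod p) := isUnit_iff_ne_zero.mpr h2ne
  set u : (ZMod p)ˣ := hu.unit with hudef
  have huc : (u : ZMod p) = 2 := hu.unit_spec
  have hou : orderOf u = p - 1 := by
    rw [← orderOf_units, huc, hprim]
  have htop : Subgroup.zpowers u = ⊤ := by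
    apply Subgroup.eq_top_of_card_eq
    rw [Nat.card_zpowers, hou, Nat.card_eq_fintype_card, ZMod.card_units_eq_totient,
      Nat.totient_prime hp]
  have hau : IsUnit a := isUnit_iff_ne_zero.mpr ha
  have hmem : hau.unit ∈ Subgroup.zpowers u := htop ▸ Subgroup.mem_top _
  have hfin : IsOfFinOrder u := isOfFinOrder_of_finite u
  rw [← hfin.mem_powers_iff_mem_zpowers] at hmem
  obtain ⟨m, hm⟩ := hmem
  simp only [] at hm
  have hmod : u ^ (m % (p - 1)) = hau.unit := by
    rw [← hou, pow_mod_orderOf, hm]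
  rcases Nat.eq_zero_or_pos (m % (p - 1)) with h0 | h0
  · refine ⟨p - 1, hp1, le_refl _, ?_⟩
    have : u ^ (p - 1) = hau.unit := by
      rw [h0, pow_zero] at hmod
      rw [← hou, pow_orderOf_eq_one, hmod]
    have := congrArg (Units.val) this
    rw [Units.val_pow_eq_pow_val, huc, hau.unit_spec] at this
    exact this
  · refine ⟨m % (p - 1), h0, le_of_lt (Nat.mod_lt _ (by omega)), ?_⟩
    have := congrArg (Units.val) hmod
    rw [Units.val_pow_eq_pow_val, huc, hau.unit_spec] at this
    exact this

theorem stmt_17 (n p : ℕ) [NeZero n] (hn6 : 6 ≤ n) (hne : Even n)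
    (hp : p.Prime) (hpodd : Odd p) (hlog : Nat.clog 2 n = p) (hpdvd : p ∣ n)
    (hprim : orderOf (2 : ZMod p) = p - 1) :
    dominationNumber (knodel n) = n / p := by
  haveI : Fact p.Prime := ⟨hp⟩
  have hp2 : 2 ≤ p := hp.two_le
  have hpne2 : p ≠ 2 := fun h => by rw [h] at hpodd; exact (by norm_num : ¬ Odd 2) hpodd
  have hp3 : 3 ≤ p := by omega
  have h2p : 2 * p ∣ n :=
    (Nat.coprime_two_left.mpr hpodd).mul_dvd_of_dvd_of_dvd hne.two_dvd hpdvd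
  haveI : NeZero (2*p) := ⟨by positivity⟩
  haveI : Fact (1 < 2*p) := ⟨by omega⟩
  -- log computation
  have hlogn : Nat.log 2 n = p - 1 := by
    have h1 : 2 ^ (p - 1) < n := by
      rw [← hlog]; exact Nat.pow_pred_clog_lt_self one_lt_two (by omega)
    have h2 : n ≤ 2 ^ p := hlog ▸ Nat.le_pow_clog one_lt_two n
    have hne2 : n ≠ 2 ^ p := by
      rintro rfl
      have := (Nat.Prime.prime hp).dvd_of_dvd_pow hpdvd
      have := Nat.le_of_dvd (by norm_num) this
      omega
    have := Nat.log_eq_of_pow_le_of_lt_pow h1.le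
      (by rw [Nat.sub_add_cancel (by omega)]; omega)
    exact this
  set m := n / (2*p) with hmdef
  have hm : 2 * p * m = n := Nat.mul_div_cancel' h2p
  have hm1 : 1 ≤ m := by
    rw [hmdef, Nat.one_le_div_iff (by omega)]
    exact Nat.le_of_dvd (by omega) h2p
  set c : ZMod n →+* ZMod (2*p) := ZMod.castHom h2p (ZMod (2*p)) with hcdef
  set c2 : ZMod (2*p) →+* ZMod 2 := ZMod.castHom (dvd_mul_right 2 p) (ZMod 2) with hc2def
  set cp : ZMod (2*p) →+* ZMod p := ZMod.castHom (dvd_mul_left p 2) (ZMod p) with hcpdef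
  have hc2' : c2 (2 : ZMod (2*p)) = 0 := by
    rw [show (2:ZMod (2*p)) = 1 + 1 by norm_num, map_add, map_one]; decide
  have hcp' : cp (2 : ZMod (2*p)) = 2 := by
    rw [show (2:ZMod (2*p)) = 1 + 1 by norm_num, map_add, map_one]; norm_num
  have hc' : c (2 : ZMod n) = 2 := by
    rw [show (2:ZMod n) = 1 + 1 by norm_num, map_add, map_one]; norm_num
  set A : Finset (ZMod n) := (Finset.range m).image (fun l => ((2*p*l : ℕ) : ZMod n)) with hAdef
  set B : Finset (ZMod n) :=
    (Finset.range m).image (fun l => ((2*p*l : ℕ) : ZMod n) - 1) with hBdef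
  have hlt : ∀ l, l < m → 2*p*l < n := by
    intro l hl
    calc 2*p*l < 2*p*m := by
          exact (Nat.mul_lt_mul_left (by omega : 0 < 2*p)).2 hl
      _ = n := hm
  have hmemA : ∀ x : ZMod n, x ∈ A ↔ c x = 0 := by
    intro x
    constructor
    · intro hx
      obtain ⟨l, hl, rfl⟩ := Finset.mem_image.mp hx
      rw [map_natCast,
        show ((2*p*l:ℕ) : ZMod (2*p)) = ((2*p:ℕ):ZMod (2*p)) * (l:ZMod (2*p)) by push_cast; ring,
        ZMod.natCast_self, zero_mul]
    · intro hx
      have hv : ((x.val : ℕ) : ZMod (2*p)) = 0 := by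
        rw [ZMod.natCast_val]
        rw [ZMod.castHom_apply] at hx
        exact hx
      rw [ZMod.natCast_eq_zero_iff] at hv
      obtain ⟨l, hl⟩ := hv
      have hxlt : x.val < n := ZMod.val_lt x
      have hlm : l < m := by
        by_contra h
        push_neg at h
        have : 2*p*m ≤ 2*p*l := Nat.mul_le_mul_left _ h
        omega
      refine Finset.mem_image.mpr ⟨l, Finset.mem_range.mpr hlm, ?_⟩
      rw [← hl, ZMod.natCast_zmod_val]
  have hmemB : ∀ x : ZMod n, x ∈ B ↔ c x = -1 := by
    intro x
    have hAB : x ∈ B ↔ x + 1 ∈ A := by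
      simp only [hBdef, hAdef, Finset.mem_image]
      constructor
      · rintro ⟨l, hl, h⟩
        exact ⟨l, hl, by rw [← h]; ring⟩
      · rintro ⟨l, hl, h⟩
        exact ⟨l, hl, by rw [h]; ring⟩
    rw [hAB, hmemA, map_add, map_one]
    constructor
    · intro h; linear_combination h
    · intro h; rw [h]; ring
  have hinj : ∀ l₁ ∈ Finset.range m, ∀ l₂ ∈ Finset.range m,
      ((2*p*l₁ : ℕ) : ZMod n) = ((2*p*l₂ : ℕ) : ZMod n) → l₁ = l₂ := by
    intro l₁ h1 l₂ h2 h
    rw [Finset.mem_range] at h1 h2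
    have := congrArg ZMod.val h
    rw [ZMod.val_natCast_of_lt (hlt _ h1), ZMod.val_natCast_of_lt (hlt _ h2)] at this
    exact Nat.eq_of_mul_eq_mul_left (by omega) this
  have hcardA : A.card = m := by
    rw [hAdef, Finset.card_image_of_injOn hinj, Finset.card_range]
  have hcardB : B.card = m := by
    rw [hBdef, Finset.card_image_of_injOn, Finset.card_range]
    intro l₁ h1 l₂ h2 h
    exact hinj l₁ h1 l₂ h2 (by linear_combination h)
  have hdisj : Disjoint A B := by
    rw [Finset.disjoint_left]
    intro x hxA hxB
    rw [hmemA] at hxA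
    rw [hmemB] at hxB
    rw [hxA] at hxB
    exact one_ne_zero (by linear_combination hxB : (1 : ZMod (2*p)) = 0)
  have hcardU : (A ∪ B).card = n / p := by
    rw [Finset.card_union_of_disjoint hdisj, hcardA, hcardB]
    have : n / p = 2 * m := by
      rw [← hm, show 2*p*m = p*(2*m) by ring]
      exact Nat.mul_div_cancel_left _ (by omega)
    omega
  -- domination
  have hdom : ∀ v, v ∉ A ∪ B → ∃ u ∈ A ∪ B, (knodel n).Adj u v := by
    intro v hv
    have hv0 : c v ≠ 0 := fun h => hv (Finset.mem_union_left _ ((hmemA v).mpr h))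
    have hv1 : c v ≠ -1 := fun h => hv (Finset.mem_union_right _ ((hmemB v).mpr h))
    have hZ2 : ∀ a : ZMod 2, a = 0 ∨ a = 1 := by decide
    set r : ZMod (2*p) := c v with hrdef
    -- choose w
    obtain ⟨w, hw2, hwp, hwr⟩ : ∃ w : ZMod (2*p), c2 w = 0 ∧ cp w ≠ 0 ∧ (w = r ∨ w = r + 1) := by
      rcases hZ2 (c2 r) with h | h
      · refine ⟨r, h, ?_, Or.inl rfl⟩
        intro hcp
        exact hv0 (crt_inj hp hpodd (by rw [map_zero]; exact h) (by rw [map_zero]; exact hcp))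
      · refine ⟨r + 1, by rw [map_add, map_one, h]; decide, ?_, Or.inr rfl⟩
        intro hcp
        apply hv1
        apply crt_inj hp hpodd
        · rw [map_neg, map_one, h]; decide
        · rw [map_neg, map_one]
          rw [map_add, map_one] at hcp
          linear_combination hcp
    obtain ⟨t, ht1, ht2, ht3⟩ := exists_pow_eq hp hpodd hprim (cp w) hwp
    have h2t : (2 : ZMod (2*p)) ^ t = w := by
      apply crt_inj hp hpodd
      · rw [map_pow, hc2', zero_pow (by omega), hw2]
      · rw [map_pow, hcp', ht3]
    set u : ZMod n := 2 ^ t - 1 - v with hudef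
    have hcu : c u = 2 ^ t - 1 - r := by
      rw [hudef, map_sub, map_sub, map_one, map_pow, hc']
    have huD : u ∈ A ∪ B := by
      rcases hwr with rfl | hw
      · apply Finset.mem_union_right
        rw [hmemB, hcu, h2t]
        ring
      · apply Finset.mem_union_left
        rw [hmemA, hcu, h2t, hw]
        ring
    refine ⟨u, huD, ?_, t, ht1, by rw [hlogn]; exact ht2, by rw [hudef]; ring⟩
    -- u ≠ v
    intro he
    set d : ZMod n →+* ZMod 2 := ZMod.castHom hne.two_dvd (ZMod 2) with hddef
    have he' : (2:ZMod n) ^ t - 1 - v = v := by rw [← hudef]; exact he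
    have hd := congrArg d he'
    have hdv2 : d (2 : ZMod n) = 0 := by
      rw [show (2:ZMod n) = 1 + 1 by norm_num, map_add, map_one]; decide
    rw [map_sub, map_sub, map_pow, map_one, hdv2, zero_pow (by omega)] at hd
    rcases hZ2 (d v) with h | h <;> rw [h] at hd <;> revert hd <;> decide
  -- lower bound
  have hlb : ∀ k, (∃ D : Finset (ZMod n),
      (∀ v, v ∉ D → ∃ u ∈ D, (knodel n).Adj u v) ∧ D.card = k) → n / p ≤ k := by
    rintro k ⟨D, hD, rfl⟩
    set N : ZMod n → Finset (ZMod n) := fun u =>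
      insert u ((Finset.Icc 1 (p-1)).image (fun t => (2:ZMod n)^t - 1 - u)) with hNdef
    have hcover : (Finset.univ : Finset (ZMod n)) ⊆ D.biUnion N := by
      intro v _
      rw [Finset.mem_biUnion]
      by_cases hvD : v ∈ D
      · exact ⟨v, hvD, Finset.mem_insert_self _ _⟩
      · obtain ⟨u, huD, hne', t, h1, h2, h3⟩ := hD v hvD
        refine ⟨u, huD, Finset.mem_insert_of_mem ?_⟩
        refine Finset.mem_image.mpr ⟨t, Finset.mem_Icc.mpr ⟨h1, by rw [hlogn] at h2; exact h2⟩, ?_⟩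
        rw [← h3]; ring
    have hNcard : ∀ u, (N u).card ≤ p := by
      intro u
      calc (N u).card ≤ _ + 1 := Finset.card_insert_le _ _
        _ ≤ (Finset.Icc 1 (p-1)).card + 1 := by
            exact Nat.add_le_add_right (Finset.card_image_le) 1
        _ = p := by rw [Nat.card_Icc]; omega
    have hn : n ≤ D.card * p := by
      calc n = (Finset.univ : Finset (ZMod n)).card := by rw [Finset.card_univ, ZMod.card]
        _ ≤ (D.biUnion N).card := Finset.card_le_card hcover
        _ ≤ ∑ u ∈ D, (N u).card := Finset.card_biUnion_le
        _ ≤ ∑ _u ∈ D, p := Finset.sum_le_sum (fun u _ => hNcard u)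
        _ = D.card * p := by rw [Finset.sum_const, smul_eq_mul]
    calc n / p ≤ D.card * p / p := Nat.div_le_div_right hn
      _ = D.card := Nat.mul_div_cancel _ (by omega)
  have hmem : n / p ∈ {k | ∃ D : Finset (ZMod n),
      (∀ v, v ∉ D → ∃ u ∈ D, (knodel n).Adj u v) ∧ D.card = k} := ⟨A ∪ B, hdom, hcardU⟩
  exact le_antisymm (Nat.sInf_le hmem) (le_csInf ⟨_, hmem⟩ (fun k hk => hlb k hk))
end
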